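/- arXiv:1906.07041 — 11 statements merged into one kernel-verified Lean document; each statement's English description precedes it below -/
import Mathlib

section
/- For channels C = [[9/10, 0], [1/10, 1]] and C̄ = [[0, 9/10], [1, 1/10]], input distribution Π = diag(1/2, 1/2), and utility matrix U = [[2, 0], [0, 1]], the maximum of tr(U · A · C · Π) over 2×2 column-stochastic matrices A equals 28/20 for C, while the corresponding maximum for C̄ equals 29/20. In particular, C̄ being a Shannon-garbling of C does not imply that C is more Blackwell-useful than C̄. -/
open Matrix BigOperators

def ColStoch {m n : ℕ} (A : Matrix (Fin m) (Fin n) ℝ) : Prop :=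
  (∀ i j, 0 ≤ A i j) ∧ ∀ j, ∑ i, A i j = 1

theorem rauh_counterexample :
    let C : Matrix (Fin 2) (Fin 2) ℝ := !![9/10, 0; 1/10, 1]
    let Cbar : Matrix (Fin 2) (Fin 2) ℝ := !![0, 9/10; 1, 1/10]
    let Pi : Matrix (Fin 2) (Fin 2) ℝ := !![1/2, 0; 0, 1/2]
    let U : Matrix (Fin 2) (Fin 2) ℝ := !![2, 0; 0, 1]
    IsGreatest {x : ℝ | ∃ A : Matrix (Fin 2) (Fin 2) ℝ,
        ColStoch A ∧ x = (U * (A * C) * Pi).trace} (28/20) ∧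
    IsGreatest {x : ℝ | ∃ A : Matrix (Fin 2) (Fin 2) ℝ,
        ColStoch A ∧ x = (U * (A * Cbar) * Pi).trace} (29/20) := by
  intro C Cbar Pi U
  constructor
  · constructor
    · refine ⟨!![1, 0; 0, 1], ⟨?_, ?_⟩, ?_⟩
      · intro i j; fin_cases i <;> fin_cases j <;> norm_num
      · intro j; fin_cases j <;> simp [Fin.sum_univ_two]
      · simp [C, Pi, U, Matrix.trace, Matrix.mul_apply, Fin.sum_univ_two]
        norm_num
    · rintro x ⟨A, ⟨hpos, hsum⟩, rfl⟩
      have h00 := hpos 0 0; have h01 := hpos 0 1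
      have h10 := hpos 1 0; have h11 := hpos 1 1
      have hs0 := hsum 0; have hs1 := hsum 1
      simp [Fin.sum_univ_two] at hs0 hs1
      simp [C, Pi, U, Matrix.trace, Matrix.mul_apply, Fin.sum_univ_two, Matrix.diag, Matrix.vecMul, dotProduct]
      nlinarith
  · constructor
    · refine ⟨!![0, 1; 1, 0], ⟨?_, ?_⟩, ?_⟩
      · intro i j; fin_cases i <;> fin_cases j <;> norm_num
      · intro j; fin_cases j <;> simp [Fin.sum_univ_two]
      · simp [Cbar, Pi, U, Matrix.trace, Matrix.mul_apply, Fin.sum_univ_two]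
        norm_num
    · rintro x ⟨A, ⟨hpos, hsum⟩, rfl⟩
      have h00 := hpos 0 0; have h01 := hpos 0 1
      have h10 := hpos 1 0; have h11 := hpos 1 1
      have hs0 := hsum 0; have hs1 := hsum 1
      simp [Fin.sum_univ_two] at hs0 hs1
      simp [Cbar, Pi, U, Matrix.trace, Matrix.mul_apply, Fin.sum_univ_two, Matrix.diag, Matrix.vecMul, dotProduct]
      nlinarith
end

section
/- Let C ∈ ℝ^{n×n} be a channel and U = α·P̃ an exact utility matrix, where α > 0 and P̃ is an n×n permutation matrix. With uniform input distribution Π = (1/n)·I, the maximal expected utility max over column-stochastic A of tr(U · A · C · Π) equals (α/n) · Σ_{i=1}^n max_{1≤j≤n} c_{ij}, where c_{ij} are the entries of C. -/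
open Matrix BigOperators

/-- Exact utility: maximal expected utility equals (α/n)·Σ_i max_j c_{ij}. -/
theorem exact_utility_max {n : ℕ} (hn : 0 < n)
    (C : Matrix (Fin n) (Fin n) ℝ) (hC : ColStoch C)
    (α : ℝ) (hα : 0 < α) (σ : Equiv.Perm (Fin n))
    (U : Matrix (Fin n) (Fin n) ℝ)
    (hU : ∀ i j, U i j = α * (if i = σ j then 1 else 0)) :
    haveI : Nonempty (Fin n) := Fin.pos_iff_nonempty.mp hn
    IsGreatest {x : ℝ | ∃ A : Matrix (Fin n) (Fin n) ℝ, ColStoch A ∧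
        x = (U * (A * C) * ((n : ℝ)⁻¹ • (1 : Matrix (Fin n) (Fin n) ℝ))).trace}
      (α / n * ∑ i, Finset.univ.sup' Finset.univ_nonempty (fun j => C i j)) := by
  haveI : Nonempty (Fin n) := Fin.pos_iff_nonempty.mp hn
  have key : ∀ A : Matrix (Fin n) (Fin n) ℝ,
      (U * (A * C) * ((n : ℝ)⁻¹ • (1 : Matrix (Fin n) (Fin n) ℝ))).trace
        = (α / n) * ∑ k, ∑ j, A k j * C j (σ k) := by
    intro A
    rw [Matrix.mul_smul, Matrix.mul_one, Matrix.trace_smul]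
    have h1 : (U * (A * C)).trace = α * ∑ k, ∑ j, A k j * C j (σ k) := by
      rw [Matrix.trace]
      simp only [Matrix.diag_apply, Matrix.mul_apply, hU, mul_ite, mul_one, mul_zero,
        ite_mul, zero_mul]
      rw [Finset.sum_comm]
      rw [Finset.mul_sum]
      refine Finset.sum_congr rfl fun k _ => ?_
      rw [Finset.sum_ite_eq' Finset.univ (σ k)]
      simp [Finset.mul_sum, Matrix.mul_apply]
    rw [h1, smul_eq_mul]
    ring
  set S := ∑ i, Finset.univ.sup' Finset.univ_nonempty (fun j => C i j) with hS
  constructor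
  · -- membership
    have ht : ∀ j : Fin n, ∃ m : Fin n,
        Finset.univ.sup' Finset.univ_nonempty (fun m => C j m) = C j m := by
      intro j
      obtain ⟨b, _, hb⟩ := Finset.exists_mem_eq_sup' Finset.univ_nonempty (fun m => C j m)
      exact ⟨b, hb⟩
    choose t ht using ht
    refine ⟨fun k j => if σ k = t j then 1 else 0, ⟨fun i j => by positivity, fun j => ?_⟩, ?_⟩
    · simp [Equiv.apply_eq_iff_eq_symm_apply, Finset.sum_ite_eq' Finset.univ (σ.symm (t j))]
    · rw [key (fun k j => if σ k = t j then 1 else 0)]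
      rw [Finset.sum_comm]
      congr 1
      refine Finset.sum_congr rfl fun j _ => ?_
      simp only [ite_mul, one_mul, zero_mul, Equiv.apply_eq_iff_eq_symm_apply]
      rw [Finset.sum_ite_eq' Finset.univ (σ.symm (t j))]
      simp [ht j]
  · -- upper bound
    rintro x ⟨A, ⟨hA0, hA1⟩, rfl⟩
    rw [key]
    apply mul_le_mul_of_nonneg_left _ (by positivity)
    rw [Finset.sum_comm, hS]
    refine Finset.sum_le_sum fun j _ => ?_
    calc ∑ k, A k j * C j (σ k)
        ≤ ∑ k, A k j * Finset.univ.sup' Finset.univ_nonempty (fun m => C j m) := by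
          refine Finset.sum_le_sum fun k _ => ?_
          exact mul_le_mul_of_nonneg_left (Finset.le_sup' _ (Finset.mem_univ (σ k))) (hA0 k j)
      _ = Finset.univ.sup' Finset.univ_nonempty (fun m => C j m) := by
          rw [← Finset.sum_mul, hA1 j, one_mul]
end

section
/- Let U ⊆ ℝ^{n×n} be a set of utility matrices each of which is a positive multiple of a permutation matrix (exact utility matrices). If C, C̄ ∈ ℝ^{n×n} are channels with uniform input distribution and C̄ is a Shannon-garbling of C, then C is more Blackwell-useful than C̄ with respect to U: for all U ∈ U, max over column-stochastic A of tr(U·A·C·Π) ≥ max over column-stochastic A of tr(U·A·C̄·Π). -/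
open Matrix BigOperators

lemma colStoch_mul {n : ℕ} {A B : Matrix (Fin n) (Fin n) ℝ}
    (hA : ColStoch A) (hB : ColStoch B) : ColStoch (A * B) := by
  refine ⟨fun i j => ?_, fun j => ?_⟩
  · rw [Matrix.mul_apply]
    exact Finset.sum_nonneg fun k _ => mul_nonneg (hA.1 i k) (hB.1 k j)
  · simp only [Matrix.mul_apply]
    rw [Finset.sum_comm]
    calc ∑ k, ∑ i, A i k * B k j = ∑ k, (∑ i, A i k) * B k j := by
          simp [Finset.sum_mul]
      _ = ∑ k, B k j := by
          refine Finset.sum_congr rfl fun k _ => ?_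
          rw [hA.2 k, one_mul]
      _ = 1 := hB.2 j

/-- Sufficiency of the Shannon-order for reduced Blackwell-usefulness w.r.t.
a set of exact utility matrices. -/
theorem shannon_implies_blackwell_exact {n : ℕ}
    (𝒰 : Set (Matrix (Fin n) (Fin n) ℝ))
    (h𝒰 : ∀ U ∈ 𝒰, ∃ (α : ℝ) (σ : Equiv.Perm (Fin n)), 0 < α ∧
        ∀ i j, U i j = α * (if i = σ j then 1 else 0))
    (C Cbar : Matrix (Fin n) (Fin n) ℝ) (hC : ColStoch C) (hCbar : ColStoch Cbar)
    (hS : ∃ M N : Matrix (Fin n) (Fin n) ℝ, ColStoch M ∧ ColStoch N ∧ Cbar = M * C * N) :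
    ∀ U ∈ 𝒰, ∀ Abar : Matrix (Fin n) (Fin n) ℝ, ColStoch Abar →
      ∃ A : Matrix (Fin n) (Fin n) ℝ, ColStoch A ∧
        (U * (A * C) * ((n : ℝ)⁻¹ • (1 : Matrix (Fin n) (Fin n) ℝ))).trace ≥
        (U * (Abar * Cbar) * ((n : ℝ)⁻¹ • (1 : Matrix (Fin n) (Fin n) ℝ))).trace := by
  intro U hU Abar hAbar
  obtain ⟨α, σ, hα, hUeq⟩ := h𝒰 U hU
  obtain ⟨M, N, hM, hN, hCbarEq⟩ := hS
  rcases Nat.eq_zero_or_pos n with hn | hn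
  · subst hn
    refine ⟨Abar, hAbar, le_of_eq ?_⟩
    simp [Matrix.trace]
  -- choose the maximizing column index for each row of C
  choose idx hidx1 hidx2 using fun r =>
    Finset.exists_max_image Finset.univ (fun i => C r i) ⟨⟨0, hn⟩, Finset.mem_univ _⟩
  set A : Matrix (Fin n) (Fin n) ℝ :=
    Matrix.of (fun j r => if j = σ.symm (idx r) then (1:ℝ) else 0) with hAdef
  have hA : ColStoch A := by
    constructor
    · intro i j; simp only [hAdef, Matrix.of_apply]; split <;> norm_num
    · intro r; simp [hAdef]
  refine ⟨A, hA, ?_⟩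
  have key : ∀ X : Matrix (Fin n) (Fin n) ℝ,
      (U * X * ((n:ℝ)⁻¹ • (1:Matrix (Fin n) (Fin n) ℝ))).trace
        = (n:ℝ)⁻¹ * (α * ∑ j, X j (σ j)) := by
    intro X
    rw [Matrix.mul_smul, Matrix.mul_one, Matrix.trace_smul, smul_eq_mul]
    congr 1
    have h1 : (U * X).trace = ∑ i, ∑ j, U i j * X j i := by
      simp [Matrix.trace, Matrix.mul_apply, Matrix.diag]
    rw [h1, Finset.sum_comm, Finset.mul_sum]
    refine Finset.sum_congr rfl fun j _ => ?_
    simp [hUeq, ite_mul, mul_assoc, Finset.sum_ite_eq']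
  rw [ge_iff_le, key, key]
  have hninv : (0:ℝ) ≤ (n:ℝ)⁻¹ := by positivity
  refine mul_le_mul_of_nonneg_left (mul_le_mul_of_nonneg_left ?_ hα.le) hninv
  -- it suffices to compare ∑ⱼ (·) j (σ j)
  have hAC : ∑ j, (A * C) j (σ j) = ∑ r, C r (idx r) := by
    simp only [Matrix.mul_apply, hAdef, Matrix.of_apply, ite_mul, one_mul, zero_mul]
    rw [Finset.sum_comm]
    refine Finset.sum_congr rfl fun r _ => ?_
    rw [Finset.sum_ite_eq' Finset.univ (σ.symm (idx r)) (fun j => C r (σ j))]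
    simp
  rw [hAC]
  set W : Matrix (Fin n) (Fin n) ℝ := Abar * M with hWdef
  have hW : ColStoch W := colStoch_mul hAbar hM
  have hexp : Abar * Cbar = W * C * N := by
    rw [hCbarEq, hWdef, ← Matrix.mul_assoc, ← Matrix.mul_assoc]
  calc ∑ j, (Abar * Cbar) j (σ j)
      = ∑ j, ∑ s, (∑ r, W j r * C r s) * N s (σ j) := by
        rw [hexp]; simp [Matrix.mul_apply]
    _ = ∑ j, ∑ s, ∑ r, W j r * C r s * N s (σ j) := by
        simp [Finset.sum_mul]
    _ ≤ ∑ j, ∑ s, ∑ r, W j r * C r (idx r) * N s (σ j) := by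
        refine Finset.sum_le_sum fun j _ => Finset.sum_le_sum fun s _ =>
          Finset.sum_le_sum fun r _ => ?_
        have := hidx2 r s (Finset.mem_univ s)
        exact mul_le_mul_of_nonneg_right
          (mul_le_mul_of_nonneg_left this (hW.1 j r)) (hN.1 s (σ j))
    _ = ∑ j, ∑ r, W j r * C r (idx r) := by
        refine Finset.sum_congr rfl fun j _ => ?_
        rw [Finset.sum_comm]
        refine Finset.sum_congr rfl fun r _ => ?_
        rw [← Finset.mul_sum, hN.2 (σ j), mul_one]
    _ = ∑ r, C r (idx r) := by
        rw [Finset.sum_comm]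
        refine Finset.sum_congr rfl fun r _ => ?_
        rw [← Finset.sum_mul, hW.2 r, one_mul]
end

section
/- For the channels C = [[0,0,1],[1/2,1/2,0],[1/2,1/2,0]] and C̄ = [[1,0,0],[0,1/2,1/2],[0,1/2,1/2]] with uniform input distribution Π = (1/3)·I, and the oblivious utility matrix U = [[1,1,0],[0,0,1],[0,0,0]]: (a) C̄ is a Shannon-garbling of C (via the permutation reversing the input alphabet); (b) the maximal expected utility over the policy space of C equals 1/3, while that over the policy space of C̄ equals 2/3. Hence Shannon-garbling does not preserve Blackwell-usefulness with respect to oblivious utility matrices. -/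
open Matrix BigOperators

private lemma tr_aux (U B : Matrix (Fin 3) (Fin 3) ℝ) :
    (U * B * ((3:ℝ)⁻¹ • (1 : Matrix (Fin 3) (Fin 3) ℝ))).trace = 3⁻¹ * (U * B).trace := by
  rw [Matrix.mul_smul, Matrix.mul_one, Matrix.trace_smul, smul_eq_mul]

set_option maxHeartbeats 1000000 in
theorem failure_oblivious :
    let C : Matrix (Fin 3) (Fin 3) ℝ := !![0, 0, 1; 1/2, 1/2, 0; 1/2, 1/2, 0]
    let Cbar : Matrix (Fin 3) (Fin 3) ℝ := !![1, 0, 0; 0, 1/2, 1/2; 0, 1/2, 1/2]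
    let Pi : Matrix (Fin 3) (Fin 3) ℝ := (3 : ℝ)⁻¹ • (1 : Matrix (Fin 3) (Fin 3) ℝ)
    let U : Matrix (Fin 3) (Fin 3) ℝ := !![1, 1, 0; 0, 0, 1; 0, 0, 0]
    (∃ M N : Matrix (Fin 3) (Fin 3) ℝ, ColStoch M ∧ ColStoch N ∧ Cbar = M * C * N) ∧
    IsGreatest {x : ℝ | ∃ A : Matrix (Fin 3) (Fin 3) ℝ,
        ColStoch A ∧ x = (U * (A * C) * Pi).trace} (1/3) ∧
    IsGreatest {x : ℝ | ∃ A : Matrix (Fin 3) (Fin 3) ℝ,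
        ColStoch A ∧ x = (U * (A * Cbar) * Pi).trace} (2/3) := by
  intro C Cbar Pi U
  have key : ∀ A : Matrix (Fin 3) (Fin 3) ℝ, (U * (A * C) * Pi).trace =
      3⁻¹ * ((A 0 1 + A 0 2) / 2 + (A 1 1 + A 1 2) / 2 + (A 2 1 + A 2 2) / 2) := by
    intro A
    rw [show Pi = (3:ℝ)⁻¹ • (1 : Matrix (Fin 3) (Fin 3) ℝ) from rfl, tr_aux]
    simp [Matrix.trace_fin_three, Matrix.mul_apply, Fin.sum_univ_three, C, U,
      Matrix.vecMul, dotProduct, Matrix.vecHead, Matrix.vecTail]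
    ring
  have keyb : ∀ A : Matrix (Fin 3) (Fin 3) ℝ, (U * (A * Cbar) * Pi).trace =
      3⁻¹ * (A 0 0 + A 1 0 + (A 2 1 + A 2 2) / 2) := by
    intro A
    rw [show Pi = (3:ℝ)⁻¹ • (1 : Matrix (Fin 3) (Fin 3) ℝ) from rfl, tr_aux]
    simp [Matrix.trace_fin_three, Matrix.mul_apply, Fin.sum_univ_three, Cbar, U,
      Matrix.vecMul, dotProduct, Matrix.vecHead, Matrix.vecTail]
    ring
  refine ⟨⟨!![1,0,0;0,1,0;0,0,1], !![0,0,1;0,1,0;1,0,0], ⟨?_, ?_⟩, ⟨?_, ?_⟩, ?_⟩,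
    ⟨?_, ?_⟩, ⟨?_, ?_⟩⟩
  · intro i j; fin_cases i <;> fin_cases j <;>
      norm_num [Matrix.vecHead, Matrix.vecTail]
  · intro j; fin_cases j <;>
      simp [Fin.sum_univ_three]
  · intro i j; fin_cases i <;> fin_cases j <;>
      norm_num [Matrix.vecHead, Matrix.vecTail]
  · intro j; fin_cases j <;>
      simp [Fin.sum_univ_three]
  · ext i j
    fin_cases i <;> fin_cases j <;>
      simp [Matrix.mul_apply, Fin.sum_univ_three, C, Cbar]
  · refine ⟨!![1,0,0;0,1,0;0,0,1], ⟨?_, ?_⟩, ?_⟩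
    · intro i j; fin_cases i <;> fin_cases j <;>
        norm_num [Matrix.vecHead, Matrix.vecTail]
    · intro j; fin_cases j <;>
        simp [Fin.sum_univ_three]
    · rw [key]; simp; norm_num
  · rintro x ⟨A, ⟨hpos, hsum⟩, rfl⟩
    rw [key]
    have h1 := hsum 1; have h2 := hsum 2
    simp only [Fin.sum_univ_three] at h1 h2
    linarith
  · refine ⟨!![1,0,0;0,0,0;0,1,1], ⟨?_, ?_⟩, ?_⟩
    · intro i j; fin_cases i <;> fin_cases j <;>
        norm_num [Matrix.vecHead, Matrix.vecTail]
    · intro j; fin_cases j <;>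
        simp [Fin.sum_univ_three]
    · rw [keyb]; simp; norm_num
  · rintro x ⟨A, ⟨hpos, hsum⟩, rfl⟩
    rw [keyb]
    have h0 := hsum 0; have h1 := hsum 1; have h2 := hsum 2
    simp only [Fin.sum_univ_three] at h0 h1 h2
    have := hpos 2 0; have := hpos 0 1; have := hpos 1 1; have := hpos 0 2; have := hpos 1 2
    linarith
end

section
/- For the channels C = [[0,0,1],[1/2,1/2,0],[1/2,1/2,0]] and C̄ = [[1,0,0],[0,1/2,1/2],[0,1/2,1/2]] with uniform input distribution Π = (1/3)·I and the doubly-stochastic utility matrix U = [[1,0,0],[0,1/2,1/2],[0,1/2,1/2]], the maximal expected utility over the policy space of C equals 1/2 while that over the policy space of C̄ equals 2/3; in particular, C is not more Blackwell-useful than C̄ with respect to the set of positive multiples of doubly-stochastic matrices, even though C̄ is a Shannon-garbling of C. -/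
open Matrix BigOperators

theorem failure_doubly_stochastic :
    let C : Matrix (Fin 3) (Fin 3) ℝ := !![0, 0, 1; 1/2, 1/2, 0; 1/2, 1/2, 0]
    let Cbar : Matrix (Fin 3) (Fin 3) ℝ := !![1, 0, 0; 0, 1/2, 1/2; 0, 1/2, 1/2]
    let Pi : Matrix (Fin 3) (Fin 3) ℝ := (3 : ℝ)⁻¹ • (1 : Matrix (Fin 3) (Fin 3) ℝ)
    let U : Matrix (Fin 3) (Fin 3) ℝ := !![1, 0, 0; 0, 1/2, 1/2; 0, 1/2, 1/2]
    (∃ M N : Matrix (Fin 3) (Fin 3) ℝ, ColStoch M ∧ ColStoch N ∧ Cbar = M * C * N) ∧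
    IsGreatest {x : ℝ | ∃ A : Matrix (Fin 3) (Fin 3) ℝ,
        ColStoch A ∧ x = (U * (A * C) * Pi).trace} (1/2) ∧
    IsGreatest {x : ℝ | ∃ A : Matrix (Fin 3) (Fin 3) ℝ,
        ColStoch A ∧ x = (U * (A * Cbar) * Pi).trace} (2/3) := by
  intro C Cbar Pi U
  refine ⟨⟨1, !![0,1,0;0,0,1;1,0,0], ?_, ?_, ?_⟩, ?_, ?_⟩
  · exact ⟨fun i j => by fin_cases i <;> fin_cases j <;> simp [Matrix.one_apply],
      fun j => by fin_cases j <;> simp [Fin.sum_univ_succ, Matrix.one_apply]⟩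
  · refine ⟨fun i j => by fin_cases i <;> fin_cases j <;> norm_num, fun j => by
      fin_cases j <;> simp [Fin.sum_univ_succ] <;> norm_num⟩
  · rw [Matrix.one_mul]
    norm_num [C, Cbar, Matrix.mul_fin_three]
  · constructor
    · refine ⟨!![0,1,1;1,0,0;0,0,0], ⟨fun i j => by fin_cases i <;> fin_cases j <;> norm_num,
        fun j => by fin_cases j <;> simp [Fin.sum_univ_succ] <;> norm_num⟩, ?_⟩
      simp [C, Pi, U, Matrix.trace, Matrix.mul_apply, Fin.sum_univ_succ, Matrix.one_apply]
      norm_num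
    · rintro x ⟨A, ⟨hpos, hsum⟩, rfl⟩
      have h0 := hsum 0; have h1 := hsum 1; have h2 := hsum 2
      simp [Fin.sum_univ_succ] at h0 h1 h2
      have p10 := hpos 1 0; have p20 := hpos 2 0; have p00 := hpos 0 0
      have p01 := hpos 0 1; have p11 := hpos 1 1; have p21 := hpos 2 1
      have p02 := hpos 0 2; have p12 := hpos 1 2; have p22 := hpos 2 2
      simp [C, Pi, U, Matrix.trace, Matrix.mul_apply, Matrix.vecMul, dotProduct,
        Fin.sum_univ_succ, Matrix.one_apply]
      linarith
  · constructor
    · refine ⟨1, ⟨fun i j => by fin_cases i <;> fin_cases j <;> simp [Matrix.one_apply],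
        fun j => by fin_cases j <;> simp [Fin.sum_univ_succ, Matrix.one_apply]⟩, ?_⟩
      simp [Cbar, Pi, U, Matrix.trace, Matrix.mul_apply, Fin.sum_univ_succ, Matrix.one_apply]
      norm_num
    · rintro x ⟨A, ⟨hpos, hsum⟩, rfl⟩
      have h0 := hsum 0; have h1 := hsum 1; have h2 := hsum 2
      simp [Fin.sum_univ_succ] at h0 h1 h2
      have p10 := hpos 1 0; have p20 := hpos 2 0; have p00 := hpos 0 0
      have p01 := hpos 0 1; have p11 := hpos 1 1; have p21 := hpos 2 1
      have p02 := hpos 0 2; have p12 := hpos 1 2; have p22 := hpos 2 2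
      simp [Cbar, Pi, U, Matrix.trace, Matrix.mul_apply, Matrix.vecMul, dotProduct,
        Fin.sum_univ_succ, Matrix.one_apply]
      linarith
end

section
/- For the 2×2 channels C = [[1, 1/2], [0, 1/2]] and C̄ = [[1/4, 3/4], [3/4, 1/4]] with uniform input distribution Π = (1/2)·I: for every exact utility matrix U = a·P (a > 0, P a 2×2 permutation matrix), the maximal expected utility over the policy space of C equals the maximal expected utility over the policy space of C̄, and both equal a·(3/4). -/
open Matrix BigOperators

theorem exact_necessity_failure_values :
    let C : Matrix (Fin 2) (Fin 2) ℝ := !![1, 1/2; 0, 1/2]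
    let Cbar : Matrix (Fin 2) (Fin 2) ℝ := !![1/4, 3/4; 3/4, 1/4]
    let Pi : Matrix (Fin 2) (Fin 2) ℝ := (2 : ℝ)⁻¹ • (1 : Matrix (Fin 2) (Fin 2) ℝ)
    ∀ (a : ℝ), 0 < a → ∀ (σ : Equiv.Perm (Fin 2))
      (U : Matrix (Fin 2) (Fin 2) ℝ),
      (∀ i j, U i j = a * (if i = σ j then 1 else 0)) →
      IsGreatest {x : ℝ | ∃ A : Matrix (Fin 2) (Fin 2) ℝ,
          ColStoch A ∧ x = (U * (A * C) * Pi).trace} (a * (3/4)) ∧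
      IsGreatest {x : ℝ | ∃ A : Matrix (Fin 2) (Fin 2) ℝ,
          ColStoch A ∧ x = (U * (A * Cbar) * Pi).trace} (a * (3/4)) := by
  intro C Cbar Pi a ha σ U hU
  have hstoch : ∀ (M : Matrix (Fin 2) (Fin 2) ℝ), M = !![1,0;0,1] ∨ M = !![0,1;1,0] → ColStoch M := by
    rintro M (rfl | rfl) <;>
      exact ⟨by intro i j; fin_cases i <;> fin_cases j <;> norm_num,
             by intro j; fin_cases j <;> simp [Fin.sum_univ_two]⟩
  have h0 : σ 0 = 0 ∨ σ 0 = 1 := by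
    generalize σ 0 = x; fin_cases x <;> simp
  have hcase : (σ 0 = 0 ∧ σ 1 = 1) ∨ (σ 0 = 1 ∧ σ 1 = 0) := by
    have hinj : σ 0 ≠ σ 1 := fun h => absurd (σ.injective h) (by decide)
    have h1 : σ 1 = 0 ∨ σ 1 = 1 := by
      generalize σ 1 = x; fin_cases x <;> simp
    rcases h0 with h0 | h0 <;> rcases h1 with h1 | h1 <;> simp_all
  have hUeq : U = !![a,0;0,a] ∨ U = !![0,a;a,0] := by
    rcases hcase with ⟨ha0, ha1⟩ | ⟨ha0, ha1⟩
    · left; ext i j; fin_cases i <;> fin_cases j <;> simp [hU, ha0, ha1]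
    · right; ext i j; fin_cases i <;> fin_cases j <;> simp [hU, ha0, ha1]
  clear hU hcase h0
  rcases hUeq with rfl | rfl <;>
  · constructor <;> constructor
    case' left.left | right.left =>
      first
      | · refine ⟨!![1,0;0,1], hstoch _ (Or.inl rfl), ?_⟩
          simp [C, Cbar, Pi, Matrix.trace, Matrix.mul_apply, Fin.sum_univ_two,
            Matrix.vecMul, dotProduct, Matrix.one_apply, Matrix.smul_apply]
          ring
      | · refine ⟨!![0,1;1,0], hstoch _ (Or.inr rfl), ?_⟩
          simp [C, Cbar, Pi, Matrix.trace, Matrix.mul_apply, Fin.sum_univ_two,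
            Matrix.vecMul, dotProduct, Matrix.one_apply, Matrix.smul_apply]
          ring
    all_goals
      rintro x ⟨A, ⟨hpos, hsum⟩, rfl⟩
      have h00 := hpos 0 0; have h10 := hpos 1 0
      have h01 := hpos 0 1; have h11 := hpos 1 1
      have hs0 := hsum 0; have hs1 := hsum 1
      simp [Fin.sum_univ_two] at hs0 hs1
      simp [C, Cbar, Pi, Matrix.trace, Matrix.mul_apply, Fin.sum_univ_two,
        Matrix.vecMul, dotProduct, Matrix.one_apply, Matrix.smul_apply]
      nlinarith [ha.le, mul_nonneg ha.le h00, mul_nonneg ha.le h01,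
        mul_nonneg ha.le h10, mul_nonneg ha.le h11]
end

section
/- For the 2×2 channels C = [[1, 1/2], [0, 1/2]] and C̄ = [[1/4, 3/4], [3/4, 1/4]], neither channel is a Shannon-garbling of the other: there exist no column-stochastic matrices M, N ∈ ℝ^{2×2} with C̄ = M·C·N, and none with C = M·C̄·N. -/
open Matrix BigOperators

set_option maxHeartbeats 1600000 in
theorem no_mutual_shannon_garbling :
    let C : Matrix (Fin 2) (Fin 2) ℝ := !![1, 1/2; 0, 1/2]
    let Cbar : Matrix (Fin 2) (Fin 2) ℝ := !![1/4, 3/4; 3/4, 1/4]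
    (¬ ∃ M N : Matrix (Fin 2) (Fin 2) ℝ, ColStoch M ∧ ColStoch N ∧ Cbar = M * C * N) ∧
    (¬ ∃ M N : Matrix (Fin 2) (Fin 2) ℝ, ColStoch M ∧ ColStoch N ∧ C = M * Cbar * N) := by
  intro C Cbar
  constructor
  · rintro ⟨M, N, ⟨hMpos, hMsum⟩, ⟨hNpos, hNsum⟩, hE⟩
    have e1 := congrFun (congrFun hE 0) 0
    have e2 := congrFun (congrFun hE 0) 1
    simp [C, Cbar, Matrix.mul_apply, Fin.sum_univ_two] at e1 e2
    have sM0 := hMsum 0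
    have sM1 := hMsum 1
    have sN0 := hNsum 0
    have sN1 := hNsum 1
    simp only [Fin.sum_univ_two] at sM0 sM1 sN0 sN1
    set a := M 0 0
    set b := M 0 1
    set p := N 0 0
    set q := N 0 1
    have ha0 : 0 ≤ a := hMpos 0 0
    have hb0 : 0 ≤ b := hMpos 0 1
    have hp0 : 0 ≤ p := hNpos 0 0
    have hq0 : 0 ≤ q := hNpos 0 1
    have ha1 : a ≤ 1 := by have := hMpos 1 0; linarith
    have hb1 : b ≤ 1 := by have := hMpos 1 1; linarith
    have hp1 : p ≤ 1 := by have := hNpos 1 0; linarith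
    have hq1 : q ≤ 1 := by have := hNpos 1 1; linarith
    have hN10 : N 1 0 = 1 - p := by linarith
    have hN11 : N 1 1 = 1 - q := by linarith
    rw [hN10] at e1
    rw [hN11] at e2
    clear_value a b p q
    clear hE hMsum hNsum hMpos hNpos hN10 hN11 sM0 sM1 sN0 sN1 M N C Cbar
    have key : (a - b) * (q - p) = 1 := by nlinarith [e1, e2]
    have h1 : (1 - (a - b)) * (1 + (q - p)) ≥ 0 := by nlinarith
    have h2 : (1 + (a - b)) * (1 - (q - p)) ≥ 0 := by nlinarith
    have heq : a - b = q - p := by nlinarith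
    have hsq : (a - b) ^ 2 = 1 := by linear_combination key + (a - b) * heq
    have hzero : (a - b - 1) * (a - b + 1) = 0 := by linear_combination hsq
    rcases mul_eq_zero.mp hzero with h | h
    · have ha : a = 1 := by linarith
      have hb : b = 0 := by linarith
      have hp : p = 0 := by linarith
      rw [ha, hb, hp] at e1
      norm_num at e1
    · have ha : a = 0 := by linarith
      have hb : b = 1 := by linarith
      have hp : p = 1 := by linarith
      rw [ha, hb, hp] at e1
      norm_num at e1
  · rintro ⟨M, N, ⟨hMpos, hMsum⟩, ⟨hNpos, hNsum⟩, hE⟩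
    have e1 := congrFun (congrFun hE 0) 0
    have e2 := congrFun (congrFun hE 0) 1
    simp [C, Cbar, Matrix.mul_apply, Fin.sum_univ_two] at e1 e2
    have sM0 := hMsum 0
    have sM1 := hMsum 1
    have sN0 := hNsum 0
    have sN1 := hNsum 1
    simp only [Fin.sum_univ_two] at sM0 sM1 sN0 sN1
    set a := M 0 0
    set b := M 0 1
    set p := N 0 0
    set q := N 0 1
    have ha0 : 0 ≤ a := hMpos 0 0
    have hb0 : 0 ≤ b := hMpos 0 1
    have hp0 : 0 ≤ p := hNpos 0 0
    have hq0 : 0 ≤ q := hNpos 0 1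
    have ha1 : a ≤ 1 := by have := hMpos 1 0; linarith
    have hb1 : b ≤ 1 := by have := hMpos 1 1; linarith
    have hp1 : p ≤ 1 := by have := hNpos 1 0; linarith
    have hq1 : q ≤ 1 := by have := hNpos 1 1; linarith
    have hN10 : N 1 0 = 1 - p := by linarith
    have hN11 : N 1 1 = 1 - q := by linarith
    rw [hN10] at e1
    rw [hN11] at e2
    clear_value a b p q
    clear hE hMsum hNsum hMpos hNpos hN10 hN11 sM0 sM1 sN0 sN1 M N C Cbar
    -- e1 : 1 = u*p + v*(1-p) with u = a/4+3b/4, v = 3a/4+b/4, both ≤ 1. Forces a = b = 1.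
    have hX0 : 0 ≤ (1 - (a/4 + 3*b/4)) * p := mul_nonneg (by linarith) hp0
    have hY0 : 0 ≤ (1 - (3*a/4 + b/4)) * (1 - p) := mul_nonneg (by linarith) (by linarith)
    have hsum : (1 - (a/4 + 3*b/4)) * p + (1 - (3*a/4 + b/4)) * (1 - p) = 0 := by
      linear_combination e1
    have hX : (1 - (a/4 + 3*b/4)) * p = 0 := by linarith
    have hY : (1 - (3*a/4 + b/4)) * (1 - p) = 0 := by linarith
    have hab : a = 1 ∧ b = 1 := by
      rcases mul_eq_zero.mp hX with hu | hp <;> rcases mul_eq_zero.mp hY with hv | hp'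
      · constructor <;> linarith
      · constructor <;> linarith
      · constructor <;> linarith
      · exfalso; linarith
    rw [hab.1, hab.2] at e2
    linarith [e2]
end

section
/- There is no subset 𝒰 ⊆ ℝ^{2×2} of utility matrices such that for all 2×2 channels C, C̄ with uniform input distribution Π = (1/2)·I: (C̄ is a Shannon-garbling of C) if and only if (for all U ∈ 𝒰, max over D in Φ(C) of tr(U·D·Π) ≥ max over D in Φ(C̄) of tr(U·D·Π)). -/
open Matrix BigOperators

/-- No set of 2×2 utility matrices makes reduced Blackwell-usefulness
equivalent to the Shannon-order. -/
theorem no_utility_set_2x2 :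
    let Pi : Matrix (Fin 2) (Fin 2) ℝ := !![1/2, 0; 0, 1/2]
    ¬ ∃ 𝒰 : Set (Matrix (Fin 2) (Fin 2) ℝ),
      ∀ C Cbar : Matrix (Fin 2) (Fin 2) ℝ, ColStoch C → ColStoch Cbar →
        ((∃ M N : Matrix (Fin 2) (Fin 2) ℝ, ColStoch M ∧ ColStoch N ∧ Cbar = M * C * N)
          ↔
         (∀ U ∈ 𝒰, ∀ Abar : Matrix (Fin 2) (Fin 2) ℝ, ColStoch Abar →
            ∃ A : Matrix (Fin 2) (Fin 2) ℝ, ColStoch A ∧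
              (U * (A * C) * Pi).trace ≥ (U * (Abar * Cbar) * Pi).trace)) := by
  intro Pi
  rintro ⟨𝒰, h⟩
  set C1 : Matrix (Fin 2) (Fin 2) ℝ := !![1, 1/2; 0, 1/2] with hC1
  set C2 : Matrix (Fin 2) (Fin 2) ℝ := !![1/2, 0; 1/2, 1] with hC2
  set Cm : Matrix (Fin 2) (Fin 2) ℝ := !![3/4, 1/4; 1/4, 3/4] with hCm
  set sw : Matrix (Fin 2) (Fin 2) ℝ := !![0, 1; 1, 0] with hsw
  have hS1 : ColStoch C1 := by
    constructor
    · intro i j; fin_cases i <;> fin_cases j <;> norm_num [hC1]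
    · intro j; fin_cases j <;> norm_num [hC1, Fin.sum_univ_two]
  have hS2 : ColStoch C2 := by
    constructor
    · intro i j; fin_cases i <;> fin_cases j <;> norm_num [hC2]
    · intro j; fin_cases j <;> norm_num [hC2, Fin.sum_univ_two]
  have hSm : ColStoch Cm := by
    constructor
    · intro i j; fin_cases i <;> fin_cases j <;> norm_num [hCm]
    · intro j; fin_cases j <;> norm_num [hCm, Fin.sum_univ_two]
  have hSsw : ColStoch sw := by
    constructor
    · intro i j; fin_cases i <;> fin_cases j <;> norm_num [hsw]
    · intro j; fin_cases j <;> norm_num [hsw, Fin.sum_univ_two]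
  have hC2eq : C2 = sw * C1 * sw := by
    ext i j; fin_cases i <;> fin_cases j <;>
      simp [hC1, hC2, hsw, Matrix.mul_apply, Fin.sum_univ_two]
  -- Cm is not a Shannon-garbling of C1
  have hNoG : ¬ ∃ M N : Matrix (Fin 2) (Fin 2) ℝ, ColStoch M ∧ ColStoch N ∧ Cm = M * C1 * N := by
    rintro ⟨M, N, hM, hN, hEq⟩
    have hp0 := hM.1 0 0
    have hp1 := hM.1 1 0
    have hq0 := hM.1 0 1
    have hq1 := hM.1 1 1
    have hr0 := hN.1 0 0
    have hr1 := hN.1 1 0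
    have hs0 := hN.1 0 1
    have hs1 := hN.1 1 1
    have hMc0 := hM.2 0
    have hMc1 := hM.2 1
    have hNc0 := hN.2 0
    have hNc1 := hN.2 1
    rw [Fin.sum_univ_two] at hMc0 hMc1 hNc0 hNc1
    have e1 : Cm 0 0 = (M * C1 * N) 0 0 := by rw [hEq]
    have e2 : Cm 0 1 = (M * C1 * N) 0 1 := by rw [hEq]
    simp [hCm, hC1, Matrix.mul_apply, Fin.sum_univ_two] at e1 e2
    nlinarith [mul_nonneg hp0 hr0, mul_nonneg hq0 hr0, mul_nonneg hp0 hs0,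
      mul_nonneg hq0 hs0, mul_nonneg hp1 hr1, mul_nonneg hq1 hr1,
      mul_nonneg hp1 hs1, mul_nonneg hq1 hs1,
      mul_nonneg hp0 hr1, mul_nonneg hq0 hr1, mul_nonneg hp1 hr0, mul_nonneg hq1 hr0,
      mul_nonneg hp0 hs1, mul_nonneg hq0 hs1, mul_nonneg hp1 hs0, mul_nonneg hq1 hs0]
  -- From the iff: RHS holds for (C1, C2)
  have h12 := (h C1 C2 hS1 hS2).mp ⟨sw, sw, hSsw, hSsw, hC2eq⟩
  -- From the iff: RHS fails for (C1, Cm)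
  have h1m : ¬ (∀ U ∈ 𝒰, ∀ Abar : Matrix (Fin 2) (Fin 2) ℝ, ColStoch Abar →
      ∃ A : Matrix (Fin 2) (Fin 2) ℝ, ColStoch A ∧
        (U * (A * C1) * Pi).trace ≥ (U * (Abar * Cm) * Pi).trace) :=
    fun hr => hNoG ((h C1 Cm hS1 hSm).mpr hr)
  push_neg at h1m
  obtain ⟨U, hU, Abar, hAbar, hlt⟩ := h1m
  obtain ⟨A0, hA0, hge⟩ := h12 U hU Abar hAbar
  have key : ∀ A : Matrix (Fin 2) (Fin 2) ℝ,
      (U * (A * Cm) * Pi).trace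
        = (1/2 : ℝ) * (U * (A * C1) * Pi).trace + (1/2 : ℝ) * (U * (A * C2) * Pi).trace := by
    intro A
    have hm : Cm = (1/2 : ℝ) • C1 + (1/2 : ℝ) • C2 := by
      ext i j; fin_cases i <;> fin_cases j <;> norm_num [hC1, hC2, hCm]
    rw [hm]
    simp [Matrix.mul_add, Matrix.add_mul, mul_smul_comm, smul_mul_assoc, smul_eq_mul]
  have l1 := hlt Abar hAbar
  have l2 := hlt A0 hA0
  rw [key Abar] at l1 l2
  linarith
end

section
/- For the channels C₁ = [[1, 1/2], [0, 1/2]] and C₂ = [[1/2, 1], [1/2, 0]], each is a Shannon-garbling of the other (via M = I and N the swap permutation). Moreover, for the utility matrix U = [[0, ε₁], [ε₂, 0]] with ε₁ > ε₂ > 0 and Π = (1/2)·I, the maximal expected utility over Φ(C₁) equals ε₁/2 + ε₂/4, while over Φ(C₂) it equals ε₁/2 + max{0, ε₂/2 − ε₁/4}; these are unequal. -/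
open Matrix BigOperators

theorem mutual_garbling_unequal_utility (ε₁ ε₂ : ℝ) (h₁ : ε₂ < ε₁) (h₂ : 0 < ε₂) :
    let C₁ : Matrix (Fin 2) (Fin 2) ℝ := !![1, 1/2; 0, 1/2]
    let C₂ : Matrix (Fin 2) (Fin 2) ℝ := !![1/2, 1; 1/2, 0]
    let Pi : Matrix (Fin 2) (Fin 2) ℝ := !![1/2, 0; 0, 1/2]
    let U : Matrix (Fin 2) (Fin 2) ℝ := !![0, ε₁; ε₂, 0]
    (∃ M N : Matrix (Fin 2) (Fin 2) ℝ, ColStoch M ∧ ColStoch N ∧ C₂ = M * C₁ * N) ∧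
    (∃ M N : Matrix (Fin 2) (Fin 2) ℝ, ColStoch M ∧ ColStoch N ∧ C₁ = M * C₂ * N) ∧
    IsGreatest {x : ℝ | ∃ A : Matrix (Fin 2) (Fin 2) ℝ,
        ColStoch A ∧ x = (U * (A * C₁) * Pi).trace} (ε₁/2 + ε₂/4) ∧
    IsGreatest {x : ℝ | ∃ A : Matrix (Fin 2) (Fin 2) ℝ,
        ColStoch A ∧ x = (U * (A * C₂) * Pi).trace} (ε₁/2 + max 0 (ε₂/2 - ε₁/4)) ∧
    ε₁/2 + ε₂/4 ≠ ε₁/2 + max 0 (ε₂/2 - ε₁/4) := by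
  intro C₁ C₂ Pi U
  have hIcs : ColStoch (!![1,0;0,1] : Matrix (Fin 2) (Fin 2) ℝ) := by
    constructor
    · intro i j; fin_cases i <;> fin_cases j <;> norm_num
    · intro j; fin_cases j <;> simp [Fin.sum_univ_two]
  have hScs : ColStoch (!![0,1;1,0] : Matrix (Fin 2) (Fin 2) ℝ) := by
    constructor
    · intro i j; fin_cases i <;> fin_cases j <;> norm_num
    · intro j; fin_cases j <;> simp [Fin.sum_univ_two]
  refine ⟨⟨!![1,0;0,1], !![0,1;1,0], hIcs, hScs, ?_⟩,
          ⟨!![1,0;0,1], !![0,1;1,0], hIcs, hScs, ?_⟩, ?_, ?_, ?_⟩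
  · show C₂ = _; ext i j; fin_cases i <;> fin_cases j <;>
      simp [C₁, C₂, Matrix.mul_apply, Fin.sum_univ_two]
  · show C₁ = _; ext i j; fin_cases i <;> fin_cases j <;>
      simp [C₁, C₂, Matrix.mul_apply, Fin.sum_univ_two]
  · constructor
    · refine ⟨!![0,1;1,0], hScs, ?_⟩
      simp [C₁, Pi, U, Matrix.trace_fin_two, Matrix.mul_apply, Matrix.vecMul, dotProduct, Fin.sum_univ_two]
      ring
    · rintro x ⟨A, ⟨hpos, hsum⟩, rfl⟩
      have h00 := hpos 0 0; have h01 := hpos 0 1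
      have h10 := hpos 1 0; have h11 := hpos 1 1
      have hc0 := hsum 0; have hc1 := hsum 1
      simp [Fin.sum_univ_two] at hc0 hc1
      simp [C₁, Pi, U, Matrix.trace_fin_two, Matrix.mul_apply, Matrix.vecMul, dotProduct, Fin.sum_univ_two]
      nlinarith [mul_nonneg h₂.le h01, mul_nonneg h₂.le h00]
  · constructor
    · rcases le_or_gt (ε₂/2 - ε₁/4) 0 with h | h
      · rw [max_eq_left h]
        refine ⟨!![0,0;1,1], ?_, ?_⟩
        · constructor
          · intro i j; fin_cases i <;> fin_cases j <;> norm_num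
          · intro j; fin_cases j <;> simp [Fin.sum_univ_two]
        · simp [C₂, Pi, U, Matrix.trace_fin_two, Matrix.mul_apply, Matrix.vecMul, dotProduct, Fin.sum_univ_two]
          ring
      · rw [max_eq_right h.le]
        refine ⟨!![1,0;0,1], hIcs, ?_⟩
        simp [C₂, Pi, U, Matrix.trace_fin_two, Matrix.mul_apply, Matrix.vecMul, dotProduct, Fin.sum_univ_two]
        ring
    · rintro x ⟨A, ⟨hpos, hsum⟩, rfl⟩
      have h00 := hpos 0 0; have h01 := hpos 0 1
      have h10 := hpos 1 0; have h11 := hpos 1 1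
      have hc0 := hsum 0; have hc1 := hsum 1
      simp [Fin.sum_univ_two] at hc0 hc1
      simp [C₂, Pi, U, Matrix.trace_fin_two, Matrix.mul_apply, Matrix.vecMul, dotProduct, Fin.sum_univ_two]
      rcases le_or_gt (ε₂/2 - ε₁/4) 0 with h | h
      · rw [max_eq_left h]
        nlinarith [mul_nonneg h₂.le h01, mul_nonneg h₂.le h00]
      · rw [max_eq_right h.le]
        nlinarith [mul_nonneg h₂.le h01, mul_nonneg h₂.le h00]
  · intro h
    rcases le_or_gt (ε₂/2 - ε₁/4) 0 with hh | hh
    · rw [max_eq_left hh] at h; linarith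
    · rw [max_eq_right hh.le] at h; linarith
end

section
/- For any channel C ∈ ℝ^{m×n}, the convexified Shannon policy space Φ_cS(C) equals the convex hull of the finite set {L·C·R : L ∈ ℒ, R ∈ ℛ}, where ℒ is the set of m×m matrices whose columns are standard basis vectors and ℛ is the set of n×n matrices whose columns are standard basis vectors. In particular, Φ_cS(C) is convex and compact. -/
open Matrix BigOperators

/-- A 0-1 matrix each of whose columns is a standard basis vector. -/
def CoordMatrix {m : ℕ} (L : Matrix (Fin m) (Fin m) ℝ) : Prop :=
  ∀ c : Fin m, ∃ i : Fin m, ∀ r : Fin m, L r c = if r = i then 1 else 0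

/-- The convexified Shannon policy space of a channel `C`. -/
def PhiCS {m n : ℕ} (C : Matrix (Fin m) (Fin n) ℝ) : Set (Matrix (Fin m) (Fin n) ℝ) :=
  {D | ∃ (k : ℕ) (p : Fin k → ℝ) (A : Fin k → Matrix (Fin m) (Fin m) ℝ)
        (B : Fin k → Matrix (Fin n) (Fin n) ℝ),
      (∀ i, 0 ≤ p i) ∧ (∑ i, p i = 1) ∧ (∀ i, ColStoch (A i)) ∧ (∀ i, ColStoch (B i)) ∧
      D = ∑ i, p i • (A i * C * B i)}

namespace PhiCSAux

/-- The coordinate matrix associated to a function `f`. -/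
def cmat {m : ℕ} (f : Fin m → Fin m) : Matrix (Fin m) (Fin m) ℝ :=
  Matrix.of fun r c => if r = f c then 1 else 0

lemma cmat_coord {m : ℕ} (f : Fin m → Fin m) : CoordMatrix (cmat f) :=
  fun c => ⟨f c, fun _ => rfl⟩

lemma coord_eq_cmat {m : ℕ} {L : Matrix (Fin m) (Fin m) ℝ} (h : CoordMatrix L) :
    ∃ f, L = cmat f := by
  choose f hf using h
  exact ⟨f, by ext r c; simpa [cmat] using hf c r⟩

lemma cmat_colStoch {m : ℕ} (f : Fin m → Fin m) : ColStoch (cmat f) := by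
  constructor
  · intro i j
    simp only [cmat, Matrix.of_apply]
    split_ifs <;> norm_num
  · intro j
    simp [cmat]

lemma coord_colStoch {m : ℕ} {L : Matrix (Fin m) (Fin m) ℝ} (h : CoordMatrix L) :
    ColStoch L := by
  obtain ⟨f, rfl⟩ := coord_eq_cmat h
  exact cmat_colStoch f

lemma weights_nonneg {m : ℕ} {A : Matrix (Fin m) (Fin m) ℝ} (hA : ColStoch A)
    (f : Fin m → Fin m) : 0 ≤ ∏ c, A (f c) c :=
  Finset.prod_nonneg fun c _ => hA.1 (f c) c

lemma sum_weights {m : ℕ} {A : Matrix (Fin m) (Fin m) ℝ} (hA : ColStoch A) :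
    ∑ f : Fin m → Fin m, ∏ c, A (f c) c = 1 := by
  have := (Finset.prod_univ_sum (fun _ : Fin m => (Finset.univ : Finset (Fin m)))
    (fun c i => A i c)).symm
  rw [Fintype.piFinset_univ] at this
  rw [this]
  simp [hA.2]

lemma colStoch_decomp {m : ℕ} {A : Matrix (Fin m) (Fin m) ℝ} (hA : ColStoch A) :
    A = ∑ f : Fin m → Fin m, (∏ c, A (f c) c) • cmat f := by
  ext r c
  rw [Matrix.sum_apply]
  simp only [Matrix.smul_apply, cmat, Matrix.of_apply, smul_eq_mul]
  have key : ∀ f : Fin m → Fin m,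
      (∏ c', A (f c') c') * (if r = f c then 1 else 0)
        = ∏ c', (if c' = c then (if r = f c' then A (f c') c' else 0) else A (f c') c') := by
    intro f
    by_cases hr : r = f c
    · rw [if_pos hr, mul_one]
      refine Finset.prod_congr rfl fun c' _ => ?_
      by_cases hc : c' = c
      · subst hc
        rw [if_pos rfl, if_pos hr]
      · rw [if_neg hc]
    · rw [if_neg hr, mul_zero]
      refine (Finset.prod_eq_zero (Finset.mem_univ c) ?_).symm
      rw [if_pos rfl, if_neg hr]
  rw [Finset.sum_congr rfl fun f _ => key f]
  have hpu := (Finset.prod_univ_sum (fun _ : Fin m => (Finset.univ : Finset (Fin m)))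
    (fun c' i => if c' = c then (if r = i then A i c' else 0) else A i c')).symm
  rw [Fintype.piFinset_univ] at hpu
  rw [hpu]
  have hcol : ∀ c' : Fin m,
      (∑ i, if c' = c then (if r = i then A i c' else 0) else A i c')
        = if c' = c then A r c else 1 := by
    intro c'
    by_cases hc : c' = c
    · subst hc; simp
    · simp [hc, hA.2 c']
  rw [Finset.prod_congr rfl fun c' _ => hcol c']
  simp

lemma mul_mem_hull {m n : ℕ} (C : Matrix (Fin m) (Fin n) ℝ)
    {A : Matrix (Fin m) (Fin m) ℝ} {B : Matrix (Fin n) (Fin n) ℝ}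
    (hA : ColStoch A) (hB : ColStoch B) :
    A * C * B ∈ convexHull ℝ
      {D : Matrix (Fin m) (Fin n) ℝ | ∃ (L : Matrix (Fin m) (Fin m) ℝ)
        (R : Matrix (Fin n) (Fin n) ℝ),
        CoordMatrix L ∧ (∀ c : Fin n, ∃ i : Fin n, ∀ r : Fin n, R r c = if r = i then 1 else 0) ∧
        D = L * C * R} := by
  set S : Set (Matrix (Fin m) (Fin n) ℝ) :=
    {D : Matrix (Fin m) (Fin n) ℝ | ∃ (L : Matrix (Fin m) (Fin m) ℝ)
        (R : Matrix (Fin n) (Fin n) ℝ),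
        CoordMatrix L ∧ (∀ c : Fin n, ∃ i : Fin n, ∀ r : Fin n, R r c = if r = i then 1 else 0) ∧
        D = L * C * R} with hS
  have h1 : A * C * B = ∑ f : Fin m → Fin m, (∏ c, A (f c) c) •
      (∑ g : Fin n → Fin n, (∏ c, B (g c) c) • (cmat f * C * cmat g)) := by
    conv_lhs => rw [colStoch_decomp hA, colStoch_decomp hB]
    simp only [Matrix.sum_mul, Matrix.mul_sum, Matrix.smul_mul, Matrix.mul_smul,
      Finset.smul_sum, smul_smul]
    rw [Finset.sum_comm]
    exact Finset.sum_congr rfl fun f _ => Finset.sum_congr rfl fun g _ => by rw [mul_comm]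
  rw [h1]
  refine Convex.sum_mem (convex_convexHull ℝ S) (fun f _ => weights_nonneg hA f)
    (sum_weights hA) fun f _ => ?_
  refine Convex.sum_mem (convex_convexHull ℝ S) (fun g _ => weights_nonneg hB g)
    (sum_weights hB) fun g _ => ?_
  exact subset_convexHull ℝ S ⟨cmat f, cmat g, cmat_coord f, cmat_coord g, rfl⟩

lemma phiCS_convex {m n : ℕ} (C : Matrix (Fin m) (Fin n) ℝ) : Convex ℝ (PhiCS C) := by
  rintro D ⟨k, p, A, B, hp, hps, hA, hB, rfl⟩ D' ⟨k', q, A', B', hq, hqs, hA', hB', rfl⟩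
    a b ha hb hab
  refine ⟨k + k', Fin.append (a • p) (b • q), Fin.append A A', Fin.append B B',
    ?_, ?_, ?_, ?_, ?_⟩
  · intro i
    refine Fin.addCases (fun i => ?_) (fun i => ?_) i
    · rw [Fin.append_left]
      exact mul_nonneg ha (hp i)
    · rw [Fin.append_right]
      exact mul_nonneg hb (hq i)
  · rw [Fin.sum_univ_add]
    simp only [Fin.append_left, Fin.append_right, Pi.smul_apply, smul_eq_mul]
    rw [← Finset.mul_sum, ← Finset.mul_sum, hps, hqs, mul_one, mul_one, hab]
  · intro i
    refine Fin.addCases (fun i => ?_) (fun i => ?_) i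
    · rw [Fin.append_left]; exact hA i
    · rw [Fin.append_right]; exact hA' i
  · intro i
    refine Fin.addCases (fun i => ?_) (fun i => ?_) i
    · rw [Fin.append_left]; exact hB i
    · rw [Fin.append_right]; exact hB' i
  · rw [Fin.sum_univ_add]
    simp only [Fin.append_left, Fin.append_right, Pi.smul_apply, smul_eq_mul]
    rw [Finset.smul_sum, Finset.smul_sum]
    congr 1 <;> exact Finset.sum_congr rfl fun i _ => smul_smul _ _ _

end PhiCSAux

open PhiCSAux in
theorem phiCS_eq_convexHull {m n : ℕ} (C : Matrix (Fin m) (Fin n) ℝ) (hC : ColStoch C) :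
    PhiCS C = convexHull ℝ
      {D | ∃ (L : Matrix (Fin m) (Fin m) ℝ) (R : Matrix (Fin n) (Fin n) ℝ),
        CoordMatrix L ∧ (∀ c : Fin n, ∃ i : Fin n, ∀ r : Fin n, R r c = if r = i then 1 else 0) ∧
        D = L * C * R} ∧
    Convex ℝ (PhiCS C) ∧ IsCompact (PhiCS C) := by
  set S : Set (Matrix (Fin m) (Fin n) ℝ) :=
    {D | ∃ (L : Matrix (Fin m) (Fin m) ℝ) (R : Matrix (Fin n) (Fin n) ℝ),
        CoordMatrix L ∧ (∀ c : Fin n, ∃ i : Fin n, ∀ r : Fin n, R r c = if r = i then 1 else 0) ∧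
        D = L * C * R} with hSdef
  have hsub1 : PhiCS C ⊆ convexHull ℝ S := by
    rintro D ⟨k, p, A, B, hp, hps, hA, hB, rfl⟩
    exact Convex.sum_mem (convex_convexHull ℝ S) (fun i _ => hp i) hps
      fun i _ => mul_mem_hull C (hA i) (hB i)
  have hsub2 : S ⊆ PhiCS C := by
    rintro D ⟨L, R, hL, hR, rfl⟩
    refine ⟨1, fun _ => 1, fun _ => L, fun _ => R, fun _ => zero_le_one, by simp,
      fun _ => coord_colStoch hL, fun _ => coord_colStoch hR, by simp⟩
  have heq : PhiCS C = convexHull ℝ S :=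
    le_antisymm hsub1 (convexHull_min hsub2 (phiCS_convex C))
  have hSfin : S.Finite := by
    have hsub : S ⊆ (fun p : (Fin m → Fin m) × (Fin n → Fin n) =>
        cmat p.1 * C * cmat p.2) '' Set.univ := by
      rintro D ⟨L, R, hL, hR, rfl⟩
      obtain ⟨f, rfl⟩ := coord_eq_cmat hL
      obtain ⟨g, rfl⟩ := coord_eq_cmat hR
      exact ⟨(f, g), trivial, rfl⟩
    exact (Set.finite_univ.image _).subset hsub
  refine ⟨heq, ?_, ?_⟩
  · rw [heq]; exact convex_convexHull ℝ S
  · rw [heq]; exact hSfin.isCompact_convexHull ℝ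
end

section
/- Let M̄ = [[M̄₁₁, M̄₁₂],[M̄₂₁, M̄₂₂]] and N̄ = [[N̄₁₁, N̄₁₂],[N̄₂₁, N̄₂₂]] be column-stochastic block matrices, Z a column-stochastic matrix, E a row vector of ones, and suppose the block equations Z̄ = M̄₁₁·Z·N̄₁₁ + M̄₁₂·E·N̄₂₁, 0 = M̄₂₁·Z·N̄₁₁ + M̄₂₂·E·N̄₂₁, 0 = M̄₁₁·Z·N̄₁₂ + M̄₁₂·E·N̄₂₂, E = M̄₂₁·Z·N̄₁₂ + M̄₂₂·E·N̄₂₂ hold, where M̄₁₂ ≠ 0 and N̄₂₁ ≠ 0 and all blocks have nonnegative entries. Then M̄₂₂ = 0, N̄₂₂ = 0, and Z̄ = (M̄₁₁ + M̄₁₂·M̄₂₁) · Z · (N̄₁₁ + N̄₁₂·N̄₂₁), where the two bracketed matrices are column-stochastic; hence Z̄ is a Shannon-garbling of Z. -/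
open Matrix BigOperators

private lemma mul_entry_nonneg {p q r : ℕ} {A : Matrix (Fin p) (Fin q) ℝ}
    {B : Matrix (Fin q) (Fin r) ℝ} (hA : ∀ i j, 0 ≤ A i j) (hB : ∀ i j, 0 ≤ B i j) :
    ∀ i j, 0 ≤ (A * B) i j := fun i j => by
  rw [Matrix.mul_apply]
  exact Finset.sum_nonneg fun s _ => mul_nonneg (hA i s) (hB s j)

/-- Case 3 of the proof of Theorem 2: block analysis of a Shannon-garbling.
Here `a = m-1` is the reduced output size, `k` the reduced input size and
`l = n-k`. The blocks of the column-stochastic matrices `M̄` and `N̄` satisfy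
the four block equations; if moreover `M̄₁₂ ≠ 0` and `N̄₂₁ ≠ 0`, then
`M̄₂₂ = 0`, `N̄₂₂ = 0`, and `Z̄ = (M̄₁₁ + M̄₁₂·M̄₂₁)·Z·(N̄₁₁ + N̄₁₂·N̄₂₁)`
with both bracketed matrices column-stochastic, so `Z̄` is a Shannon-garbling of `Z`. -/
theorem block_case_three {a k l : ℕ}
    (M11 : Matrix (Fin a) (Fin a) ℝ) (M12 : Matrix (Fin a) (Fin 1) ℝ)
    (M21 : Matrix (Fin 1) (Fin a) ℝ) (M22 : Matrix (Fin 1) (Fin 1) ℝ)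
    (N11 : Matrix (Fin k) (Fin k) ℝ) (N12 : Matrix (Fin k) (Fin l) ℝ)
    (N21 : Matrix (Fin l) (Fin k) ℝ) (N22 : Matrix (Fin l) (Fin l) ℝ)
    (Z Zbar : Matrix (Fin a) (Fin k) ℝ)
    (E : Matrix (Fin 1) (Fin l) ℝ) (hE : ∀ i j, E i j = 1)
    -- nonnegativity of all blocks
    (hM11 : ∀ i j, 0 ≤ M11 i j) (hM12 : ∀ i j, 0 ≤ M12 i j)
    (hM21 : ∀ i j, 0 ≤ M21 i j) (hM22 : ∀ i j, 0 ≤ M22 i j)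
    (hN11 : ∀ i j, 0 ≤ N11 i j) (hN12 : ∀ i j, 0 ≤ N12 i j)
    (hN21 : ∀ i j, 0 ≤ N21 i j) (hN22 : ∀ i j, 0 ≤ N22 i j)
    -- column-stochasticity of the full matrices M̄ and N̄
    (hMcol : ∀ j : Fin a, ∑ i, M11 i j + M21 0 j = 1)
    (hMcol' : ∑ i, M12 i 0 + M22 0 0 = 1)
    (hNcol : ∀ j : Fin k, ∑ i, N11 i j + ∑ i, N21 i j = 1)
    (hNcol' : ∀ j : Fin l, ∑ i, N12 i j + ∑ i, N22 i j = 1)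
    (hZ : ColStoch Z) (hZbar : ColStoch Zbar)
    -- the four block equations
    (e1 : Zbar = M11 * Z * N11 + M12 * E * N21)
    (e2 : (0 : Matrix (Fin 1) (Fin k) ℝ) = M21 * Z * N11 + M22 * E * N21)
    (e3 : (0 : Matrix (Fin a) (Fin l) ℝ) = M11 * Z * N12 + M12 * E * N22)
    (e4 : E = M21 * Z * N12 + M22 * E * N22)
    (hM12ne : M12 ≠ 0) (hN21ne : N21 ≠ 0) :
    M22 = 0 ∧ N22 = 0 ∧
    Zbar = (M11 + M12 * M21) * Z * (N11 + N12 * N21) ∧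
    ColStoch (M11 + M12 * M21) ∧ ColStoch (N11 + N12 * N21) := by
  -- nonnegativity of products
  have hZnn := hZ.1
  have hA := mul_entry_nonneg (mul_entry_nonneg hM21 hZnn) hN11
  have hB := mul_entry_nonneg (mul_entry_nonneg hM11 hZnn) hN12
  have hEnn : ∀ (i : Fin 1) (j : Fin l), 0 ≤ E i j := fun i j => by rw [hE]; norm_num
  have hC := mul_entry_nonneg (mul_entry_nonneg hM22 hEnn) hN21
  have hD := mul_entry_nonneg (mul_entry_nonneg hM12 hEnn) hN22
  -- a positive entry of N21
  obtain ⟨i1, j0, hpos⟩ : ∃ i j, 0 < N21 i j := by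
    by_contra h
    push_neg at h
    exact hN21ne (by ext i j; exact le_antisymm (h i j) (hN21 i j))
  -- a positive entry of M12
  obtain ⟨i0, hpos'⟩ : ∃ i, 0 < M12 i 0 := by
    by_contra h
    push_neg at h
    apply hM12ne
    ext i j
    have hj : j = 0 := Subsingleton.elim j 0
    rw [hj]
    exact le_antisymm (h i) (hM12 i 0)
  -- entries of (M22 * E * N21) and (M12 * E * N22)
  have hCval : ∀ j, (M22 * E * N21) 0 j = M22 0 0 * ∑ s, N21 s j := by
    intro j
    simp [Matrix.mul_apply, Fin.sum_univ_one, hE, Finset.mul_sum]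
  have hDval : ∀ i j, (M12 * E * N22) i j = M12 i 0 * ∑ s, N22 s j := by
    intro i j
    simp [Matrix.mul_apply, Fin.sum_univ_one, hE, Finset.mul_sum]
  -- M22 = 0
  have hM22z : M22 0 0 = 0 := by
    have h := congrFun (congrFun e2 0) j0
    simp only [Matrix.add_apply, Matrix.zero_apply] at h
    have hCpos : 0 ≤ M22 0 0 * ∑ s, N21 s j0 := by rw [← hCval]; exact hC 0 j0
    have hsum : 0 < ∑ s, N21 s j0 :=
      Finset.sum_pos' (fun s _ => hN21 s j0) ⟨i1, Finset.mem_univ _, hpos⟩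
    have : M22 0 0 * ∑ s, N21 s j0 = 0 := by
      have := hA 0 j0
      rw [hCval j0] at h
      linarith
    have := (mul_eq_zero.1 this).resolve_right (ne_of_gt hsum)
    exact this
  have hM22 : M22 = 0 := by
    ext i j
    rw [Fin.fin_one_eq_zero i, Fin.fin_one_eq_zero j, hM22z, Matrix.zero_apply]
  -- N22 = 0
  have hN22sum : ∀ j, ∑ s, N22 s j = 0 := by
    intro j
    have h := congrFun (congrFun e3 i0) j
    simp only [Matrix.add_apply, Matrix.zero_apply] at h
    rw [hDval i0 j] at h
    have hBij := hB i0 j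
    have hDij := hD i0 j
    rw [hDval i0 j] at hDij
    have hprod : M12 i0 0 * ∑ s, N22 s j = 0 := by linarith
    exact (mul_eq_zero.1 hprod).resolve_left (ne_of_gt hpos')
  have hN22 : N22 = 0 := by
    ext i j
    have := Finset.sum_eq_zero_iff_of_nonneg (fun s _ => hN22 s j) |>.1 (hN22sum j) i
      (Finset.mem_univ _)
    simpa using this
  -- simplified equations
  have e2' : M21 * Z * N11 = 0 := by
    have : M22 * E * N21 = 0 := by rw [hM22]; simp
    rw [this, add_zero] at e2
    exact e2.symm
  have e3' : M11 * Z * N12 = 0 := by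
    have : M12 * E * N22 = 0 := by rw [hN22]; simp
    rw [this, add_zero] at e3
    exact e3.symm
  have e4' : M21 * Z * N12 = E := by
    have : M22 * E * N22 = 0 := by rw [hM22]; simp
    rw [this, add_zero] at e4
    exact e4.symm
  -- column sums
  have hM12sum : ∑ i, M12 i 0 = 1 := by rw [hM22z] at hMcol'; linarith
  have hN12sum : ∀ j, ∑ i, N12 i j = 1 := by
    intro j
    have := hNcol' j
    rw [hN22sum j] at this
    linarith
  refine ⟨hM22, hN22, ?_, ⟨?_, ?_⟩, ⟨?_, ?_⟩⟩
  · -- the key identity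
    have expand : (M11 + M12 * M21) * Z * (N11 + N12 * N21) =
        M11 * Z * N11 + (M11 * Z * N12) * N21 + M12 * (M21 * Z * N11)
          + M12 * (M21 * Z * N12) * N21 := by
      simp only [Matrix.add_mul, Matrix.mul_add, Matrix.mul_assoc]
      abel
    rw [expand, e2', e3', e4', Matrix.mul_zero, Matrix.zero_mul, add_zero, add_zero, e1]
  · intro i j
    simp only [Matrix.add_apply]
    exact add_nonneg (hM11 i j) (mul_entry_nonneg hM12 hM21 i j)
  · intro j
    have : ∑ i, (M11 + M12 * M21) i j = ∑ i, M11 i j + (∑ i, M12 i 0) * M21 0 j := by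
      simp only [Matrix.add_apply, Matrix.mul_apply, Fin.sum_univ_one, Finset.sum_add_distrib,
        Finset.sum_mul]
    rw [this, hM12sum, one_mul, hMcol j]
  · intro i j
    simp only [Matrix.add_apply]
    exact add_nonneg (hN11 i j) (mul_entry_nonneg hN12 hN21 i j)
  · intro j
    have : ∑ i, (N11 + N12 * N21) i j = ∑ i, N11 i j + ∑ s, (∑ i, N12 i s) * N21 s j := by
      simp only [Matrix.add_apply, Matrix.mul_apply, Finset.sum_add_distrib, Finset.sum_mul]
      rw [Finset.sum_comm]
    rw [this]
    simp only [hN12sum, one_mul]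
    exact hNcol j
end
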